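/- Let G be a group and N a normal subgroup. If N satisfies the minimal condition on G-invariant subgroups and G/N satisfies the weak minimal condition on normal subgroups, then G satisfies the weak minimal condition on normal subgroups. -/

import Mathlib

open scoped Pointwise

/-- A group `X` satisfies the weak minimal condition on normal subgroups if there is no
strictly descending sequence of normal subgroups, each of infinite index in the previous. -/
def WeakMinNormal (X : Type*) [Group X] : Prop :=
  ¬ ∃ f : ℕ → Subgroup X, StrictAnti f ∧ (∀ n, (f n).Normal) ∧
    ∀ n, (f (n + 1)).relIndex (f n) = 0

/-- Dedekind's modular law for a normal subgroup. -/
lemma dedekind_aux {G : Type*} [Group G] (N : Subgroup G) (hN : N.Normal)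
    (A C : Subgroup G) (hAC : A ≤ C) : (A ⊔ N) ⊓ C = A ⊔ (N ⊓ C) := by
  haveI := hN
  apply le_antisymm
  · intro x hx
    rw [Subgroup.mem_inf] at hx
    obtain ⟨hx1, hx2⟩ := hx
    have hx1' : x ∈ ((A : Set G) * (N : Set G)) := by
      rw [← Subgroup.mul_normal A N]; exact hx1
    obtain ⟨a, ha, n, hn, rfl⟩ := hx1'
    have hnC : n ∈ C := by
      have : a⁻¹ * (a * n) ∈ C := mul_mem (inv_mem (hAC ha)) hx2
      simpa using this
    exact mul_mem (Subgroup.mem_sup_left ha) (Subgroup.mem_sup_right ⟨hn, hnC⟩)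
  · exact sup_le (le_inf le_sup_left hAC)
      (le_inf (inf_le_left.trans le_sup_right) inf_le_right)

theorem stmt_6 {G : Type*} [Group G] (N : Subgroup G) (hN : N.Normal)
    (hminN : ∀ f : ℕ → Subgroup G, Antitone f → (∀ n, f n ≤ N ∧ (f n).Normal) →
      ∃ n, ∀ m, n ≤ m → f m = f n)
    (hGN : WeakMinNormal (G ⧸ N)) :
    WeakMinNormal G := by
  rintro ⟨f, hf, hfn, hfi⟩
  obtain ⟨k, hk⟩ := hminN (fun n => f n ⊓ N) (fun a b hab => inf_le_inf_right N (hf.antitone hab))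
    (fun n => ⟨inf_le_right, @Subgroup.normal_inf_normal _ _ _ _ (hfn n) hN⟩)
  set π := QuotientGroup.mk' N
  refine hGN ⟨fun n => (f (n + k)).map π, ?_, ?_, ?_⟩
  case refine_3 =>
    intro n
    have hcomap : (Subgroup.comap π ((f (n + 1 + k)).map π)) = f (n + 1 + k) ⊔ N := by
      rw [Subgroup.comap_map_eq, QuotientGroup.ker_mk']
    have h1 : ((f (n + 1 + k)).map π).relIndex ((f (n + k)).map π)
        = (f (n + 1 + k) ⊔ N).relIndex (f (n + k)) := by
      rw [← Subgroup.relIndex_comap, hcomap]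
    rw [h1, ← Subgroup.inf_relIndex_right,
      dedekind_aux N hN _ _ (hf.antitone (by omega))]
    have hNeq : N ⊓ f (n + k) = f (n + 1 + k) ⊓ N := by
      rw [inf_comm, hk (n + k) (by omega), hk (n + 1 + k) (by omega)]
    rw [hNeq, sup_inf_self]
    have := hfi (n + k)
    have heq : n + k + 1 = n + 1 + k := by omega
    rwa [heq] at this
  case refine_2 =>
    intro n
    exact Subgroup.Normal.map (hfn (n + k)) π (QuotientGroup.mk'_surjective N)
  case refine_1 =>
    apply strictAnti_nat_of_succ_lt
    intro n
    have hle : (f (n + 1 + k)).map π ≤ (f (n + k)).map π :=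
      Subgroup.map_mono (hf.antitone (by omega))
    refine lt_of_le_of_ne hle (fun heq => ?_)
    have h1 : f (n + 1 + k) ⊔ N = f (n + k) ⊔ N := by
      have e := congrArg (Subgroup.comap π) heq
      rwa [Subgroup.comap_map_eq, Subgroup.comap_map_eq, QuotientGroup.ker_mk'] at e
    have h2 : f (n + k) = f (n + 1 + k) := by
      have hded := dedekind_aux N hN (f (n + 1 + k)) (f (n + k)) (hf.antitone (by omega))
      rw [h1] at hded
      have hNeq : N ⊓ f (n + k) = f (n + 1 + k) ⊓ N := by
        rw [inf_comm, hk (n + k) (by omega), hk (n + 1 + k) (by omega)]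
      rw [hNeq, sup_inf_self] at hded
      calc f (n + k) = (f (n + k) ⊔ N) ⊓ f (n + k) := by
            rw [inf_eq_right.mpr le_sup_left]
        _ = f (n + 1 + k) := hded
    exact absurd h2.symm (hf (by omega)).ne
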